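/- Main error bound: Let Î be the orthogonal projector onto Span(Ĉ)+Span(D̂), Â of full column rank with Â_p = ÎÂ and ÂᵀÎÂ invertible. Assume ‖I − Â⁺ÎÂ‖₂ ≤ ρ < 1 and cond(Â) ≤ ω < ∞. Then with β₁ = (2−ρ)/(1−ρ) and β₂ = 1 + ω/(1−ρ), the reduced solution X̂*_min = (Î − Â_pÂ_p⁺)q̂ + (Â_p⁺)ᵀb̂ and exact solution X̂_min = (I − ÂÂ⁺)q̂ + (Â⁺)ᵀb̂ satisfy ‖X̂*_min − X̂_min‖ ≤ ‖Îq̂ − q̂‖ + (β₁‖b̂‖‖Â⁺‖₂² + β₂‖q̂‖‖Â⁺‖₂)·‖ÎÂ − Â‖₂. -/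

import Mathlib

open Matrix
open scoped Matrix.Norms.L2Operator

lemma proj_norm_le_one {n : ℕ} {P : Matrix (Fin n) (Fin n) ℝ}
    (hPT : Pᵀ = P) (hPP : P * P = P) : ‖P‖ ≤ 1 := by
  have h := Matrix.l2_opNorm_conjTranspose_mul_self P
  rw [Matrix.conjTranspose_eq_transpose_of_trivial, hPT, hPP] at h
  nlinarith [norm_nonneg P]

lemma opNorm_transpose {m n : ℕ} (X : Matrix (Fin m) (Fin n) ℝ) : ‖Xᵀ‖ = ‖X‖ := by
  rw [← Matrix.conjTranspose_eq_transpose_of_trivial, Matrix.l2_opNorm_conjTranspose]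

lemma mulVec_injective_of_rank_full {M N : Type*} [Fintype M] [Fintype N] [DecidableEq N]
    (B : Matrix M N ℝ) (h : B.rank = Fintype.card N) : Function.Injective B.mulVec := by
  have h2 := LinearMap.finrank_range_add_finrank_ker B.mulVecLin
  rw [Module.finrank_fintype_fun_eq_card] at h2
  rw [Matrix.rank] at h
  have hker : Module.finrank ℝ (LinearMap.ker B.mulVecLin) = 0 := by omega
  have hbot : LinearMap.ker B.mulVecLin = ⊥ := Submodule.finrank_eq_zero.mp hker
  have hinj := LinearMap.ker_eq_bot.mp hbot
  intro x y hxy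
  exact hinj (by simpa [Matrix.mulVecLin_apply] using hxy)

lemma isUnit_transpose_mul_self_of_inj {M N : Type*} [Fintype M] [Fintype N] [DecidableEq N]
    (B : Matrix M N ℝ) (h : Function.Injective B.mulVec) : IsUnit (Bᵀ * B) := by
  rw [← Matrix.mulVec_injective_iff_isUnit]
  intro x y hxy
  have hz : (Bᵀ * B) *ᵥ (x - y) = 0 := by
    rw [Matrix.mulVec_sub, hxy, sub_self]
  have h1 : (B *ᵥ (x - y)) ⬝ᵥ (B *ᵥ (x - y)) = 0 := by
    have e : (x - y) ⬝ᵥ ((Bᵀ * B) *ᵥ (x - y)) = (B *ᵥ (x - y)) ⬝ᵥ (B *ᵥ (x - y)) := by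
      rw [← Matrix.mulVec_mulVec, Matrix.dotProduct_mulVec, Matrix.vecMul_transpose]
    rw [hz, dotProduct_zero] at e
    exact e.symm
  have h0 : B *ᵥ (x - y) = 0 := dotProduct_self_eq_zero.mp h1
  have hxy0 : x - y = 0 := by
    apply h
    rw [h0, Matrix.mulVec_zero]
  exact sub_eq_zero.mp hxy0

lemma proj_props {n d k : ℕ} (C : Matrix (Fin n) (Fin d) ℝ) (D : Matrix (Fin n) (Fin k) ℝ)
    (Cp : Matrix (Fin d) (Fin n) ℝ) (U : Matrix (Fin n) (Fin n) ℝ)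
    (UDp : Matrix (Fin k) (Fin n) ℝ) (P : Matrix (Fin n) (Fin n) ℝ)
    (hCp : Cp = (Cᵀ * C)⁻¹ * Cᵀ) (hU : U = 1 - C * Cp)
    (hUDp : UDp = (Dᵀ * U * D)⁻¹ * Dᵀ * Uᵀ) (hP : P = U * D * UDp + C * Cp)
    (hrank : (Matrix.fromCols C D).rank = d + k) :
    Pᵀ = P ∧ P * P = P := by
  have hinj : Function.Injective (Matrix.fromCols C D).mulVec := by
    apply mulVec_injective_of_rank_full
    simpa using hrank
  have hCinj : Function.Injective C.mulVec := by
    intro x y hxy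
    have h1 : Matrix.fromCols C D *ᵥ Sum.elim x 0 = Matrix.fromCols C D *ᵥ Sum.elim y 0 := by
      rw [Matrix.fromCols_mulVec_sumElim, Matrix.fromCols_mulVec_sumElim,
        Matrix.mulVec_zero]
      simpa using hxy
    have h2 := hinj h1
    funext i
    simpa using congrFun h2 (Sum.inl i)
  have hCu := isUnit_transpose_mul_self_of_inj C hCinj
  have hCdet : IsUnit (Cᵀ * C).det := (Matrix.isUnit_iff_isUnit_det _).mp hCu
  have hCpC : Cp * C = 1 := by
    rw [hCp, Matrix.mul_assoc, Matrix.nonsing_inv_mul _ hCdet]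
  have hRR : (C * Cp) * (C * Cp) = C * Cp := by
    calc (C * Cp) * (C * Cp) = C * ((Cp * C) * Cp) := by simp only [Matrix.mul_assoc]
    _ = C * Cp := by rw [hCpC, Matrix.one_mul]
  have hUC : U * C = 0 := by
    rw [hU, Matrix.sub_mul, Matrix.one_mul, Matrix.mul_assoc, hCpC, Matrix.mul_one, sub_self]
  have hCpU : Cp * U = 0 := by
    rw [hU, Matrix.mul_sub, Matrix.mul_one, ← Matrix.mul_assoc, hCpC, Matrix.one_mul, sub_self]
  have hRT : (C * Cp)ᵀ = C * Cp := by
    rw [hCp]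
    simp only [Matrix.transpose_mul, Matrix.transpose_transpose, Matrix.transpose_nonsing_inv,
      Matrix.mul_assoc]
  have hUT : Uᵀ = U := by rw [hU, Matrix.transpose_sub, Matrix.transpose_one, hRT]
  have hUU : U * U = U := by
    rw [hU]
    simp only [Matrix.sub_mul, Matrix.mul_sub, Matrix.one_mul, Matrix.mul_one, hRR]
    abel
  have hUDinj : Function.Injective (U * D).mulVec := by
    intro x y hxy
    have hz : (U * D) *ᵥ (x - y) = 0 := by rw [Matrix.mulVec_sub, hxy, sub_self]
    have hDz : D *ᵥ (x - y) = C *ᵥ (Cp *ᵥ (D *ᵥ (x - y))) := by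
      rw [← Matrix.mulVec_mulVec, hU, Matrix.sub_mulVec, Matrix.one_mulVec, sub_eq_zero] at hz
      calc D *ᵥ (x - y) = (C * Cp) *ᵥ (D *ᵥ (x - y)) := hz
        _ = C *ᵥ (Cp *ᵥ (D *ᵥ (x - y))) := (Matrix.mulVec_mulVec _ _ _).symm
    have h0 : Matrix.fromCols C D *ᵥ Sum.elim (-(Cp *ᵥ (D *ᵥ (x - y)))) (x - y) =
        Matrix.fromCols C D *ᵥ (0 : Fin d ⊕ Fin k → ℝ) := by
      rw [Matrix.mulVec_zero, Matrix.fromCols_mulVec_sumElim, Matrix.mulVec_neg, ← hDz,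
        neg_add_cancel]
    have h2 := hinj h0
    have h3 : x - y = 0 := funext fun i => by simpa using congrFun h2 (Sum.inr i)
    exact sub_eq_zero.mp h3
  have hGu := isUnit_transpose_mul_self_of_inj (U * D) hUDinj
  have hGG : (U * D)ᵀ * (U * D) = Dᵀ * U * D := by
    rw [Matrix.transpose_mul, hUT, Matrix.mul_assoc, ← Matrix.mul_assoc U U D, hUU,
      ← Matrix.mul_assoc]
  have hUDu : IsUnit (Dᵀ * U * D) := hGG ▸ hGu
  have hUDdet : IsUnit (Dᵀ * U * D).det := (Matrix.isUnit_iff_isUnit_det _).mp hUDu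
  have hSymUD : (Dᵀ * U * D)ᵀ = Dᵀ * U * D := by
    rw [Matrix.transpose_mul, Matrix.transpose_mul, Matrix.transpose_transpose, hUT,
      ← Matrix.mul_assoc]
  have hUDpG : UDp * (U * D) = 1 := by
    rw [hUDp, hUT]
    have h4 : Dᵀ * (U * (U * D)) = Dᵀ * U * D := by
      rw [← Matrix.mul_assoc U U D, hUU, ← Matrix.mul_assoc]
    calc ((Dᵀ * U * D)⁻¹ * Dᵀ * U) * (U * D)
        = (Dᵀ * U * D)⁻¹ * (Dᵀ * (U * (U * D))) := by simp only [Matrix.mul_assoc]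
      _ = (Dᵀ * U * D)⁻¹ * (Dᵀ * U * D) := by rw [h4]
      _ = 1 := Matrix.nonsing_inv_mul _ hUDdet
  have hQT : (U * D * UDp)ᵀ = U * D * UDp := by
    have hinvT : ((Dᵀ * U * D)⁻¹)ᵀ = (Dᵀ * U * D)⁻¹ := by
      rw [Matrix.transpose_nonsing_inv, hSymUD]
    have hinvT2 : ((Dᵀ * (U * D))⁻¹)ᵀ = (Dᵀ * (U * D))⁻¹ := by
      rw [← Matrix.mul_assoc, Matrix.transpose_nonsing_inv, hSymUD]
    rw [hUDp]
    simp only [Matrix.transpose_mul, Matrix.transpose_transpose, hinvT, hinvT2, hUT,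
      Matrix.mul_assoc]
  have hQQ : (U * D * UDp) * (U * D * UDp) = U * D * UDp := by
    calc (U * D * UDp) * (U * D * UDp) = (U * D) * ((UDp * (U * D)) * UDp) := by
          simp only [Matrix.mul_assoc]
      _ = U * D * UDp := by rw [hUDpG, Matrix.one_mul]
  have hQR : (U * D * UDp) * (C * Cp) = 0 := by
    have h5 : U * (C * Cp) = 0 := by rw [← Matrix.mul_assoc, hUC, Matrix.zero_mul]
    rw [hUDp, hUT]
    simp only [Matrix.mul_assoc, h5, Matrix.mul_zero]
  have hRQ : (C * Cp) * (U * D * UDp) = 0 := by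
    have h5 : Cp * (U * (D * UDp)) = 0 := by rw [← Matrix.mul_assoc, hCpU, Matrix.zero_mul]
    simp only [Matrix.mul_assoc, h5, Matrix.mul_zero]
  constructor
  · rw [hP, Matrix.transpose_add, hQT, hRT]
  · rw [hP, Matrix.add_mul, Matrix.mul_add, Matrix.mul_add, hQQ, hQR, hRQ, hRR]
    abel

set_option maxHeartbeats 1000000 in
lemma key_bound {n m : ℕ} (A : Matrix (Fin n) (Fin m) ℝ) (P : Matrix (Fin n) (Fin n) ℝ)
    (q : Matrix (Fin n) (Fin 1) ℝ) (b : Matrix (Fin m) (Fin 1) ℝ) (ρ ω : ℝ)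
    (hPT : Pᵀ = P) (hPP : P * P = P)
    (hArank : A.rank = m)
    (hPAu : IsUnit (Aᵀ * P * A))
    (hρ : ‖(1 : Matrix (Fin m) (Fin m) ℝ) - ((Aᵀ * A)⁻¹ * Aᵀ) * P * A‖ ≤ ρ) (hρ1 : ρ < 1)
    (hω : ‖A‖ * ‖(Aᵀ * A)⁻¹ * Aᵀ‖ ≤ ω) (hm : 0 < m) :
    ‖((P - (P * A) * (((P * A)ᵀ * (P * A))⁻¹ * (P * A)ᵀ)) * q
        + (((P * A)ᵀ * (P * A))⁻¹ * (P * A)ᵀ)ᵀ * b)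
      - ((1 - A * ((Aᵀ * A)⁻¹ * Aᵀ)) * q + ((Aᵀ * A)⁻¹ * Aᵀ)ᵀ * b)‖ ≤
      ‖P * q - q‖ + ((2 - ρ) / (1 - ρ) * ‖b‖ * ‖(Aᵀ * A)⁻¹ * Aᵀ‖ ^ 2
          + (1 + ω / (1 - ρ)) * ‖q‖ * ‖(Aᵀ * A)⁻¹ * Aᵀ‖) * ‖P * A - A‖ := by
  have hAu : IsUnit (Aᵀ * A) :=
    isUnit_transpose_mul_self_of_inj A (mulVec_injective_of_rank_full A (by simpa using hArank))
  have hAdet : IsUnit (Aᵀ * A).det := (Matrix.isUnit_iff_isUnit_det _).mp hAu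
  set Ap : Matrix (Fin m) (Fin n) ℝ := (Aᵀ * A)⁻¹ * Aᵀ with hAp
  set E : Matrix (Fin n) (Fin m) ℝ := P * A - A with hE
  have hApA : Ap * A = 1 := by rw [hAp, Matrix.mul_assoc, Matrix.nonsing_inv_mul _ hAdet]
  have hATAT : (Aᵀ * A)ᵀ = Aᵀ * A := by
    rw [Matrix.transpose_mul, Matrix.transpose_transpose]
  have hApT : Apᵀ = A * (Aᵀ * A)⁻¹ := by
    rw [hAp, Matrix.transpose_mul, Matrix.transpose_transpose, Matrix.transpose_nonsing_inv,
      hATAT]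
  have hinvAA : (Aᵀ * A)⁻¹ = Ap * Apᵀ := by
    rw [hApT, hAp]
    calc (Aᵀ * A)⁻¹ = (Aᵀ * A)⁻¹ * ((Aᵀ * A) * (Aᵀ * A)⁻¹) := by
          rw [Matrix.mul_nonsing_inv _ hAdet, Matrix.mul_one]
      _ = (Aᵀ * A)⁻¹ * Aᵀ * (A * (Aᵀ * A)⁻¹) := by simp only [Matrix.mul_assoc]
  set M : Matrix (Fin m) (Fin m) ℝ := Ap * P * A with hM
  have hApE : Ap * E = M - 1 := by
    rw [hE, Matrix.mul_sub, hApA, hM]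
    simp only [hAp, Matrix.mul_assoc]
  have hMu : IsUnit M := by
    have h1 : IsUnit ((Aᵀ * A)⁻¹) := by
      rw [Matrix.isUnit_iff_isUnit_det]
      exact Matrix.isUnit_nonsing_inv_det _ hAdet
    have h2 : M = (Aᵀ * A)⁻¹ * (Aᵀ * P * A) := by
      rw [hM, hAp]
      simp only [Matrix.mul_assoc]
    rw [h2]
    exact h1.mul hPAu
  have hMdet : IsUnit M.det := (Matrix.isUnit_iff_isUnit_det _).mp hMu
  have hMiM : M⁻¹ * M = 1 := Matrix.nonsing_inv_mul _ hMdet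
  have hMMi : M * M⁻¹ = 1 := Matrix.mul_nonsing_inv _ hMdet
  have hM1 : M = 1 + Ap * E := by rw [hApE]; abel
  -- the reduced pseudoinverse
  set N : Matrix (Fin m) (Fin n) ℝ := M⁻¹ * (Ap * P) with hN
  have hAppTApp : (P * A)ᵀ * (P * A) = Aᵀ * P * A := by
    rw [Matrix.transpose_mul, hPT]
    calc Aᵀ * P * (P * A) = Aᵀ * (P * P) * A := by simp only [Matrix.mul_assoc]
      _ = Aᵀ * P * A := by rw [hPP]
  have hfact : Aᵀ * P * A = (Aᵀ * A) * M := by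
    rw [hM, hAp]
    calc Aᵀ * P * A = (Aᵀ * A) * ((Aᵀ * A)⁻¹ * (Aᵀ * (P * A))) := by
          rw [← Matrix.mul_assoc, Matrix.mul_nonsing_inv _ hAdet, Matrix.one_mul,
            ← Matrix.mul_assoc]
      _ = (Aᵀ * A) * ((Aᵀ * A)⁻¹ * Aᵀ * P * A) := by simp only [Matrix.mul_assoc]
  have hApppEq : ((P * A)ᵀ * (P * A))⁻¹ * (P * A)ᵀ = N := by
    rw [hAppTApp, hfact, Matrix.mul_inv_rev, hN, Matrix.transpose_mul, hPT]
    simp only [hAp, Matrix.mul_assoc]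
  -- key identity S1
  have hS1 : Ap * P - Ap = (Aᵀ * A)⁻¹ * Eᵀ := by
    rw [hE, Matrix.transpose_sub, Matrix.transpose_mul, hPT, Matrix.mul_sub]
    rw [hAp]
    simp only [Matrix.mul_assoc]
  -- identity for the b-term
  have hMinv_eq : M⁻¹ * (M - 1) = 1 - M⁻¹ := by
    rw [Matrix.mul_sub, hMiM, Matrix.mul_one]
  have hT3 : N - Ap = (Aᵀ * A)⁻¹ * Eᵀ - M⁻¹ * (Ap * E) * (Ap * P) := by
    rw [← hS1, hApE]
    have h6 : M⁻¹ * (M - 1) * (Ap * P) = Ap * P - M⁻¹ * (Ap * P) := by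
      rw [hMinv_eq, Matrix.sub_mul, Matrix.one_mul]
    rw [h6, hN]
    abel
  -- identity for the q-term
  have hMN : M * N = Ap * P := by
    rw [hN, ← Matrix.mul_assoc, hMMi, Matrix.one_mul]
  clear_value Ap E M N
  have hPAN : (P * A) * N = A * (Ap * P) + (1 - A * Ap) * E * N := by
    have h7 : (P * A) * N = A * N + E * N := by
      rw [hE]
      simp only [Matrix.sub_mul, Matrix.add_mul]
      abel
    have h8 : (1 - A * Ap) * E * N = E * N - A * ((Ap * E) * N) := by
      simp only [Matrix.sub_mul, Matrix.one_mul, Matrix.mul_assoc]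
    have h9 : A * N + A * ((Ap * E) * N) = A * (Ap * P) := by
      rw [← Matrix.mul_add]
      congr 1
      calc N + Ap * E * N = (1 + Ap * E) * N := by rw [Matrix.add_mul, Matrix.one_mul]
        _ = M * N := by rw [← hM1]
        _ = Ap * P := hMN
    rw [h7, h8, ← h9]
    abel
  have hT2 : A * Ap - (P * A) * N
      = -(A * ((Aᵀ * A)⁻¹ * Eᵀ)) - (1 - A * Ap) * E * N := by
    rw [← hS1, hPAN, Matrix.mul_sub A (Ap * P) Ap]
    abel
  -- norm facts
  have hPn : ‖P‖ ≤ 1 := proj_norm_le_one hPT hPP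
  have hAApT : (A * Ap)ᵀ = A * Ap := by
    rw [Matrix.transpose_mul, hApT, Matrix.mul_assoc, ← hAp]
  have hAApP : (A * Ap) * (A * Ap) = A * Ap := by
    have h5 : Ap * (A * Ap) = Ap := by rw [← Matrix.mul_assoc, hApA, Matrix.one_mul]
    rw [Matrix.mul_assoc, h5]
  have hAApn : ‖A * Ap‖ ≤ 1 := proj_norm_le_one hAApT hAApP
  have hIAApT : ((1 : Matrix (Fin n) (Fin n) ℝ) - A * Ap)ᵀ = 1 - A * Ap := by
    rw [Matrix.transpose_sub, Matrix.transpose_one, hAApT]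
  have hIAApP : ((1 : Matrix (Fin n) (Fin n) ℝ) - A * Ap) * (1 - A * Ap) = 1 - A * Ap := by
    simp only [Matrix.sub_mul, Matrix.mul_sub, Matrix.one_mul, Matrix.mul_one, hAApP]
    abel
  have hIAApn : ‖(1 : Matrix (Fin n) (Fin n) ℝ) - A * Ap‖ ≤ 1 := proj_norm_le_one hIAApT hIAApP
  have h1n : ‖(1 : Matrix (Fin m) (Fin m) ℝ)‖ ≤ 1 :=
    proj_norm_le_one Matrix.transpose_one (Matrix.one_mul 1)
  have hρ0 : 0 ≤ ρ := le_trans (norm_nonneg _) hρ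
  have h1ρ : 0 < 1 - ρ := by linarith
  have hc0 : 0 ≤ 1 / (1 - ρ) := div_nonneg zero_le_one (le_of_lt h1ρ)
  have hρE : ‖Ap * E‖ ≤ ρ := by
    have hne : (1 : Matrix (Fin m) (Fin m) ℝ) - M = -(Ap * E) := by rw [hApE]; abel
    calc ‖Ap * E‖ = ‖-(Ap * E)‖ := (norm_neg _).symm
      _ = ‖(1 : Matrix (Fin m) (Fin m) ℝ) - M‖ := by rw [← hne]
      _ ≤ ρ := hρ
  have hMinv : ‖M⁻¹‖ ≤ 1 / (1 - ρ) := by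
    have hid : M⁻¹ = 1 - M⁻¹ * (Ap * E) := by
      rw [hApE, hMinv_eq]
      abel
    have hb2 : ‖M⁻¹‖ ≤ 1 + ‖M⁻¹‖ * ρ := by
      calc ‖M⁻¹‖ = ‖(1 : Matrix (Fin m) (Fin m) ℝ) - M⁻¹ * (Ap * E)‖ := by rw [← hid]
        _ ≤ ‖(1 : Matrix (Fin m) (Fin m) ℝ)‖ + ‖M⁻¹ * (Ap * E)‖ := norm_sub_le _ _
        _ ≤ 1 + ‖M⁻¹‖ * ρ := by
            have hmm := Matrix.l2_opNorm_mul M⁻¹ (Ap * E)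
            have h2 : ‖M⁻¹‖ * ‖Ap * E‖ ≤ ‖M⁻¹‖ * ρ :=
              mul_le_mul_of_nonneg_left hρE (norm_nonneg _)
            linarith
    rw [le_div_iff₀ h1ρ]
    nlinarith [norm_nonneg (M⁻¹)]
  have hω1 : (1 : ℝ) ≤ ω := by
    have hne : (1 : Matrix (Fin m) (Fin m) ℝ) ≠ 0 := by
      intro h
      have h2 := congrFun (congrFun h ⟨0, hm⟩) ⟨0, hm⟩
      simp [Matrix.one_apply_eq] at h2
    have hsq := Matrix.l2_opNorm_conjTranspose_mul_self (1 : Matrix (Fin m) (Fin m) ℝ)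
    rw [Matrix.conjTranspose_one, Matrix.one_mul] at hsq
    have hpos : 0 < ‖(1 : Matrix (Fin m) (Fin m) ℝ)‖ := norm_pos_iff.mpr hne
    have h1e : ‖(1 : Matrix (Fin m) (Fin m) ℝ)‖ = 1 := by nlinarith
    calc (1:ℝ) = ‖(1 : Matrix (Fin m) (Fin m) ℝ)‖ := h1e.symm
      _ = ‖Ap * A‖ := by rw [hApA]
      _ ≤ ‖Ap‖ * ‖A‖ := Matrix.l2_opNorm_mul _ _
      _ = ‖A‖ * ‖Ap‖ := mul_comm _ _
      _ ≤ ω := hω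
  have hApPn : ‖Ap * P‖ ≤ ‖Ap‖ := by
    calc ‖Ap * P‖ ≤ ‖Ap‖ * ‖P‖ := Matrix.l2_opNorm_mul _ _
      _ ≤ ‖Ap‖ * 1 := mul_le_mul_of_nonneg_left hPn (norm_nonneg _)
      _ = ‖Ap‖ := mul_one _
  have hNn : ‖N‖ ≤ 1 / (1 - ρ) * ‖Ap‖ := by
    rw [hN]
    calc ‖M⁻¹ * (Ap * P)‖ ≤ ‖M⁻¹‖ * ‖Ap * P‖ := Matrix.l2_opNorm_mul _ _
      _ ≤ 1 / (1 - ρ) * ‖Ap‖ := mul_le_mul hMinv hApPn (norm_nonneg _) hc0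
  have hX1 : ‖(Aᵀ * A)⁻¹ * Eᵀ‖ ≤ ‖Ap‖ * (‖Ap‖ * ‖E‖) := by
    rw [hinvAA, Matrix.mul_assoc]
    calc ‖Ap * (Apᵀ * Eᵀ)‖ ≤ ‖Ap‖ * ‖Apᵀ * Eᵀ‖ := Matrix.l2_opNorm_mul _ _
      _ ≤ ‖Ap‖ * (‖Apᵀ‖ * ‖Eᵀ‖) :=
          mul_le_mul_of_nonneg_left (Matrix.l2_opNorm_mul _ _) (norm_nonneg _)
      _ = ‖Ap‖ * (‖Ap‖ * ‖E‖) := by rw [opNorm_transpose, opNorm_transpose]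
  have hX2 : ‖M⁻¹ * (Ap * E) * (Ap * P)‖ ≤ 1 / (1 - ρ) * (‖Ap‖ * ‖E‖) * ‖Ap‖ := by
    calc ‖M⁻¹ * (Ap * E) * (Ap * P)‖ ≤ ‖M⁻¹ * (Ap * E)‖ * ‖Ap * P‖ := Matrix.l2_opNorm_mul _ _
      _ ≤ (‖M⁻¹‖ * ‖Ap * E‖) * ‖Ap * P‖ :=
          mul_le_mul_of_nonneg_right (Matrix.l2_opNorm_mul _ _) (norm_nonneg _)
      _ ≤ (1 / (1 - ρ) * (‖Ap‖ * ‖E‖)) * ‖Ap‖ := by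
          have hAE : ‖Ap * E‖ ≤ ‖Ap‖ * ‖E‖ := Matrix.l2_opNorm_mul _ _
          have h3 : ‖M⁻¹‖ * ‖Ap * E‖ ≤ 1 / (1 - ρ) * (‖Ap‖ * ‖E‖) :=
            mul_le_mul hMinv hAE (norm_nonneg _) hc0
          exact mul_le_mul h3 hApPn (norm_nonneg _)
            (mul_nonneg hc0 (mul_nonneg (norm_nonneg _) (norm_nonneg _)))
  have hT3n : ‖N - Ap‖ ≤ ‖Ap‖ * (‖Ap‖ * ‖E‖) + 1 / (1 - ρ) * (‖Ap‖ * ‖E‖) * ‖Ap‖ := by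
    rw [hT3]
    calc ‖(Aᵀ * A)⁻¹ * Eᵀ - M⁻¹ * (Ap * E) * (Ap * P)‖
        ≤ ‖(Aᵀ * A)⁻¹ * Eᵀ‖ + ‖M⁻¹ * (Ap * E) * (Ap * P)‖ := norm_sub_le _ _
      _ ≤ ‖Ap‖ * (‖Ap‖ * ‖E‖) + 1 / (1 - ρ) * (‖Ap‖ * ‖E‖) * ‖Ap‖ := add_le_add hX1 hX2
  have hXn : ‖A * ((Aᵀ * A)⁻¹ * Eᵀ)‖ ≤ ‖Ap‖ * ‖E‖ := by
    have he : A * ((Aᵀ * A)⁻¹ * Eᵀ) = (A * Ap) * (Apᵀ * Eᵀ) := by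
      rw [hinvAA]; simp only [Matrix.mul_assoc]
    rw [he]
    calc ‖(A * Ap) * (Apᵀ * Eᵀ)‖ ≤ ‖A * Ap‖ * ‖Apᵀ * Eᵀ‖ := Matrix.l2_opNorm_mul _ _
      _ ≤ 1 * (‖Apᵀ‖ * ‖Eᵀ‖) :=
          mul_le_mul hAApn (Matrix.l2_opNorm_mul _ _) (norm_nonneg _) zero_le_one
      _ = ‖Ap‖ * ‖E‖ := by rw [one_mul, opNorm_transpose, opNorm_transpose]
  have hYn : ‖(1 - A * Ap) * E * N‖ ≤ ‖E‖ * (1 / (1 - ρ) * ‖Ap‖) := by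
    calc ‖(1 - A * Ap) * E * N‖ ≤ ‖(1 - A * Ap) * E‖ * ‖N‖ := Matrix.l2_opNorm_mul _ _
      _ ≤ (1 * ‖E‖) * (1 / (1 - ρ) * ‖Ap‖) := by
          have h4 : ‖(1 - A * Ap) * E‖ ≤ 1 * ‖E‖ := by
            calc ‖(1 - A * Ap) * E‖ ≤ ‖(1 : Matrix (Fin n) (Fin n) ℝ) - A * Ap‖ * ‖E‖ :=
                  Matrix.l2_opNorm_mul _ _
              _ ≤ 1 * ‖E‖ := mul_le_mul_of_nonneg_right hIAApn (norm_nonneg _)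
          exact mul_le_mul h4 hNn (norm_nonneg _) (by positivity)
      _ = ‖E‖ * (1 / (1 - ρ) * ‖Ap‖) := by rw [one_mul]
  have hT2n : ‖A * Ap - (P * A) * N‖ ≤ ‖Ap‖ * ‖E‖ + ‖E‖ * (1 / (1 - ρ) * ‖Ap‖) := by
    rw [hT2]
    calc ‖-(A * ((Aᵀ * A)⁻¹ * Eᵀ)) - (1 - A * Ap) * E * N‖
        = ‖A * ((Aᵀ * A)⁻¹ * Eᵀ) + (1 - A * Ap) * E * N‖ := by
          rw [← norm_neg]; congr 1; abel
      _ ≤ ‖A * ((Aᵀ * A)⁻¹ * Eᵀ)‖ + ‖(1 - A * Ap) * E * N‖ := norm_add_le _ _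
      _ ≤ ‖Ap‖ * ‖E‖ + ‖E‖ * (1 / (1 - ρ) * ‖Ap‖) := add_le_add hXn hYn
  -- final assembly
  rw [hApppEq]
  have hgoal_eq : (P - (P * A) * N) * q + Nᵀ * b - ((1 - A * Ap) * q + Apᵀ * b)
      = (P - 1) * q + (A * Ap - (P * A) * N) * q + (N - Ap)ᵀ * b := by
    simp only [Matrix.sub_mul, Matrix.add_mul, Matrix.one_mul, Matrix.transpose_sub]
    abel
  rw [hgoal_eq]
  have step1 : ‖(P - 1) * q + (A * Ap - (P * A) * N) * q + (N - Ap)ᵀ * b‖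
      ≤ ‖(P - 1) * q‖ + ‖(A * Ap - (P * A) * N) * q‖ + ‖(N - Ap)ᵀ * b‖ := norm_add₃_le
  have e1 : ‖(P - 1) * q‖ = ‖P * q - q‖ := by rw [Matrix.sub_mul, Matrix.one_mul]
  have e2 : ‖(A * Ap - (P * A) * N) * q‖ ≤ (‖Ap‖ * ‖E‖ + ‖E‖ * (1 / (1 - ρ) * ‖Ap‖)) * ‖q‖ := by
    calc ‖(A * Ap - (P * A) * N) * q‖ ≤ ‖A * Ap - (P * A) * N‖ * ‖q‖ := Matrix.l2_opNorm_mul _ _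
      _ ≤ (‖Ap‖ * ‖E‖ + ‖E‖ * (1 / (1 - ρ) * ‖Ap‖)) * ‖q‖ :=
          mul_le_mul_of_nonneg_right hT2n (norm_nonneg _)
  have e3 : ‖(N - Ap)ᵀ * b‖
      ≤ (‖Ap‖ * (‖Ap‖ * ‖E‖) + 1 / (1 - ρ) * (‖Ap‖ * ‖E‖) * ‖Ap‖) * ‖b‖ := by
    calc ‖(N - Ap)ᵀ * b‖ ≤ ‖(N - Ap)ᵀ‖ * ‖b‖ := Matrix.l2_opNorm_mul _ _
      _ = ‖N - Ap‖ * ‖b‖ := by rw [opNorm_transpose]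
      _ ≤ (‖Ap‖ * (‖Ap‖ * ‖E‖) + 1 / (1 - ρ) * (‖Ap‖ * ‖E‖) * ‖Ap‖) * ‖b‖ :=
          mul_le_mul_of_nonneg_right hT3n (norm_nonneg _)
  have hfrac1 : (2 - ρ) / (1 - ρ) = 1 + 1 / (1 - ρ) := by
    field_simp
    ring
  have hfrac2 : ω / (1 - ρ) = ω * (1 / (1 - ρ)) := by
    field_simp
  have ha0 : (0:ℝ) ≤ ‖Ap‖ := norm_nonneg _
  have he0 : (0:ℝ) ≤ ‖E‖ := norm_nonneg _
  have hq0 : (0:ℝ) ≤ ‖q‖ := norm_nonneg _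
  have hb0 : (0:ℝ) ≤ ‖b‖ := norm_nonneg _
  have hkey : (‖Ap‖ * ‖E‖ + ‖E‖ * (1 / (1 - ρ) * ‖Ap‖)) * ‖q‖
      + (‖Ap‖ * (‖Ap‖ * ‖E‖) + 1 / (1 - ρ) * (‖Ap‖ * ‖E‖) * ‖Ap‖) * ‖b‖
      ≤ ((2 - ρ) / (1 - ρ) * ‖b‖ * ‖Ap‖ ^ 2 + (1 + ω / (1 - ρ)) * ‖q‖ * ‖Ap‖) * ‖E‖ := by
    rw [hfrac1, hfrac2]
    nlinarith [mul_nonneg (mul_nonneg (mul_nonneg (sub_nonneg.mpr hω1) hc0) (mul_nonneg ha0 he0)) hq0]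
  calc ‖(P - 1) * q + (A * Ap - (P * A) * N) * q + (N - Ap)ᵀ * b‖
      ≤ ‖(P - 1) * q‖ + ‖(A * Ap - (P * A) * N) * q‖ + ‖(N - Ap)ᵀ * b‖ := step1
    _ ≤ ‖P * q - q‖ + ((‖Ap‖ * ‖E‖ + ‖E‖ * (1 / (1 - ρ) * ‖Ap‖)) * ‖q‖
        + (‖Ap‖ * (‖Ap‖ * ‖E‖) + 1 / (1 - ρ) * (‖Ap‖ * ‖E‖) * ‖Ap‖) * ‖b‖) := by
        rw [e1]; linarith [e2, e3]
    _ ≤ ‖P * q - q‖ + ((2 - ρ) / (1 - ρ) * ‖b‖ * ‖Ap‖ ^ 2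
        + (1 + ω / (1 - ρ)) * ‖q‖ * ‖Ap‖) * ‖E‖ := by linarith [hkey]

/-- Main approximation error bound for the variational
subspace solution. Vectors `q̂`, `b̂` are represented as column matrices
(whose L2 operator norm is the Euclidean norm). -/
theorem main_error_bound
    (n d k m : ℕ) (C : Matrix (Fin n) (Fin d) ℝ) (D : Matrix (Fin n) (Fin k) ℝ)
    (A : Matrix (Fin n) (Fin m) ℝ)
    (q : Matrix (Fin n) (Fin 1) ℝ) (b : Matrix (Fin m) (Fin 1) ℝ)
    (ρ ω : ℝ)
    (hrank : (Matrix.fromCols C D).rank = d + k)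
    (hArank : A.rank = m) :
    let Cp : Matrix (Fin d) (Fin n) ℝ := (Cᵀ * C)⁻¹ * Cᵀ
    let U : Matrix (Fin n) (Fin n) ℝ := 1 - C * Cp
    let UDp : Matrix (Fin k) (Fin n) ℝ := (Dᵀ * U * D)⁻¹ * Dᵀ * Uᵀ
    let Ihat : Matrix (Fin n) (Fin n) ℝ := U * D * UDp + C * Cp
    let Ap : Matrix (Fin m) (Fin n) ℝ := (Aᵀ * A)⁻¹ * Aᵀ
    let App : Matrix (Fin n) (Fin m) ℝ := Ihat * A
    let Appp : Matrix (Fin m) (Fin n) ℝ := (Appᵀ * App)⁻¹ * Appᵀ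
    let Xred : Matrix (Fin n) (Fin 1) ℝ := (Ihat - App * Appp) * q + Apppᵀ * b
    let Xexact : Matrix (Fin n) (Fin 1) ℝ := (1 - A * Ap) * q + Apᵀ * b
    IsUnit (Aᵀ * Ihat * A) →
    ‖(1 : Matrix (Fin m) (Fin m) ℝ) - Ap * Ihat * A‖ ≤ ρ → ρ < 1 →
    ‖A‖ * ‖Ap‖ ≤ ω →
      ‖Xred - Xexact‖ ≤
        ‖Ihat * q - q‖ +
          ((2 - ρ) / (1 - ρ) * ‖b‖ * ‖Ap‖ ^ 2 +
            (1 + ω / (1 - ρ)) * ‖q‖ * ‖Ap‖) * ‖Ihat * A - A‖ := by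
  intro Cp U UDp Ihat Ap App Appp Xred Xexact hPAu hρ hρ1 hω
  obtain ⟨hPT, hPP⟩ := proj_props C D Cp U UDp Ihat rfl rfl rfl rfl hrank
  rcases Nat.eq_zero_or_pos m with hm | hm
  · subst hm
    have h1 : App * Appp = 0 := by ext i j; simp [Matrix.mul_apply]
    have h2 : Apppᵀ * b = 0 := by ext i j; simp [Matrix.mul_apply]
    have h3 : A * Ap = 0 := by ext i j; simp [Matrix.mul_apply]
    have h4 : Apᵀ * b = 0 := by ext i j; simp [Matrix.mul_apply]
    have h5 : Ihat * A - A = (0 : Matrix (Fin n) (Fin 0) ℝ) := by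
      ext i j; exact Fin.elim0 j
    have hX : Xred - Xexact = Ihat * q - q := by
      show ((Ihat - App * Appp) * q + Apppᵀ * b) - ((1 - A * Ap) * q + Apᵀ * b)
          = Ihat * q - q
      rw [h1, h2, h3, h4, sub_zero, sub_zero, add_zero, add_zero, Matrix.one_mul]
    rw [hX, h5, norm_zero, mul_zero, add_zero]
  · exact key_bound A Ihat q b ρ ω hPT hPP hArank hPAu hρ hρ1 hω hm
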